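/- (Corollary 2) Fix a nonempty isthmus-free edge set E ⊆ (V choose 2) and let g = g(E) be its girth (the length of its shortest cycle). There exists a constant C > 0, depending only on (V,E), such that for every finite additive abelian group F and every symmetric subset A ⊆ F: | [Γ^A]_E − Σ_{H ∈ P_V, H ⊆ E} (−1)^{|H|} · α^{|E|−|H|} · ᾱ^{|H|} · μ(∅,H) | ≤ C · ᾱ^{g−1}. -/

import Mathlib

open scoped Classical

noncomputable section

/-- Number of connected components of the graph on `V` with edge set `E`. -/
def cComp (V : Type) [Fintype V] (E : Finset (Sym2 V)) : ℕ :=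
  Nat.card (SimpleGraph.fromEdgeSet (E : Set (Sym2 V))).ConnectedComponent

/-- `E` is isthmus-free: it contains no edge whose removal increases the number
of connected components. -/
def IsthmusFree (V : Type) [Fintype V] (E : Finset (Sym2 V)) : Prop :=
  ∀ t ∈ E, ¬ cComp V (E.erase t) > cComp V E

/-- Möbius function of the poset `P_V` of isthmus-free edge sets on `V`,
ordered by inclusion: `μ(K,K) = 1` and `∑_{L ∈ P_V, K ⊆ L ⊆ H} μ(K,L) = 0` for `K ⊊ H`. -/
def muPV (V : Type) [Fintype V] (K H : Finset (Sym2 V)) : ℤ :=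
  if K = H then 1
  else - ∑ L ∈ ((H.powerset.filter (fun L => K ⊆ L ∧ L ≠ H ∧ IsthmusFree V L)).attach),
      muPV V K L.1
termination_by H.card
decreasing_by
  have hL := L.2
  simp only [Finset.mem_filter, Finset.mem_powerset] at hL
  exact Finset.card_lt_card (lt_of_le_of_ne hL.1 hL.2.2.1)

/-- `[Γ^A]_E`: the probability that a uniformly random coloring `X : V → F` has all
differences along edges of `E` inside `A`. -/
def Gamma (V : Type) [Fintype V] (F : Type) [Fintype F] [AddCommGroup F]
    (A : Finset F) (E : Finset (Sym2 V)) : ℝ :=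
  (Nat.card {X : V → F //
      ∀ e ∈ E, ∀ u w : V, e = s(u, w) → X u - X w ∈ A} : ℝ) /
    (Fintype.card F : ℝ) ^ (Fintype.card V)

end

set_option linter.unusedSectionVars false

noncomputable section Aux

open Finset

variable {V : Type} [Fintype V]

/-- oriented difference along an edge, via the chosen representative `Sym2.out`. -/
def edgeDiff {F : Type} [AddCommGroup F] (X : V → F) (e : Sym2 V) : F :=
  X e.out.1 - X e.out.2

lemma sym2_mk_out (e : Sym2 V) : s(e.out.1, e.out.2) = e := by
  exact Quot.out_eq e

/-- sum over colorings of the product over edges of `φ` of the edge difference -/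
def Zsum (V : Type) [Fintype V] (F : Type) [Fintype F] [AddCommGroup F]
    (φ : F → ℝ) (K : Finset (Sym2 V)) : ℝ :=
  ∑ X : V → F, ∏ e ∈ K, φ (edgeDiff X e)

variable {F : Type} [Fintype F] [AddCommGroup F]

lemma Zsum_empty (φ : F → ℝ) : Zsum V F φ ∅ = (Fintype.card F : ℝ) ^ (Fintype.card V) := by
  simp [Zsum, Finset.card_univ, Fintype.card_fun]

/-- The key "shift" lemma: if `t = s(u,w)` is a bridge of the graph of `K`
(its endpoints are not joined in `K.erase t`), then the `t`-factor averages out. -/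
lemma Zsum_erase (φ : F → ℝ) {K : Finset (Sym2 V)} {t : Sym2 V} (ht : t ∈ K)
    {u w : V} (htuw : t = s(u, w))
    (hnr : ¬ (SimpleGraph.fromEdgeSet ((K.erase t : Finset (Sym2 V)) : Set (Sym2 V))).Reachable u w) :
    (Fintype.card F : ℝ) * Zsum V F φ K = (∑ c : F, φ c) * Zsum V F φ (K.erase t) := by
  set G' := SimpleGraph.fromEdgeSet ((K.erase t : Finset (Sym2 V)) : Set (Sym2 V)) with hG'
  set g : F → V → F := fun c x => if G'.Reachable u x then c else 0 with hg
  -- shifting invariance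
  have hshift : ∀ c : F, Zsum V F φ K = ∑ X : V → F, ∏ e ∈ K, φ (edgeDiff (X + g c) e) := by
    intro c
    exact Fintype.sum_equiv (Equiv.addRight (g c))
      (fun X => ∏ e ∈ K, φ (edgeDiff (X + g c) e))
      (fun X => ∏ e ∈ K, φ (edgeDiff X e)) (fun X => rfl) |>.symm
  -- unchanged on non-t edges
  have hinv : ∀ (c : F) (e : Sym2 V), e ∈ K.erase t → ∀ X : V → F,
      edgeDiff (X + g c) e = edgeDiff X e := by
    intro c e he X
    by_cases hab : e.out.1 = e.out.2
    · simp [edgeDiff, hab]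
    · have hadj : G'.Adj e.out.1 e.out.2 := by
        rw [hG', SimpleGraph.fromEdgeSet_adj]
        exact ⟨by rw [sym2_mk_out]; exact_mod_cast he, hab⟩
      have : G'.Reachable u e.out.1 ↔ G'.Reachable u e.out.2 :=
        ⟨fun h => h.trans hadj.reachable, fun h => h.trans hadj.symm.reachable⟩
      simp only [edgeDiff, Pi.add_apply, hg]
      by_cases h1 : G'.Reachable u e.out.1
      · rw [if_pos h1, if_pos (this.mp h1)]; abel
      · rw [if_neg h1, if_neg (fun h2 => h1 (this.mpr h2))]; abel
  -- the t edge shifts by ±c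
  have hu : G'.Reachable u u := SimpleGraph.Reachable.refl u
  have htshift : (∀ (c : F) (X : V → F), edgeDiff (X + g c) t = edgeDiff X t + c) ∨
      (∀ (c : F) (X : V → F), edgeDiff (X + g c) t = edgeDiff X t - c) := by
    have hout : s(t.out.1, t.out.2) = s(u, w) := by rw [sym2_mk_out]; exact htuw
    rcases Sym2.eq_iff.mp hout with ⟨h1, h2⟩ | ⟨h1, h2⟩
    · left
      intro c X
      simp only [edgeDiff, Pi.add_apply, hg, h1, h2, if_pos hu, if_neg hnr]
      abel
    · right
      intro c X
      simp only [edgeDiff, Pi.add_apply, hg, h1, h2, if_pos hu, if_neg hnr]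
      abel
  calc (Fintype.card F : ℝ) * Zsum V F φ K = ∑ c : F, Zsum V F φ K := by
        rw [Finset.sum_const, Finset.card_univ, nsmul_eq_mul]
    _ = ∑ c : F, ∑ X : V → F, (φ (edgeDiff (X + g c) t)) * ∏ e ∈ K.erase t, φ (edgeDiff X e) := by
        refine Finset.sum_congr rfl fun c _ => ?_
        rw [hshift c]
        refine Finset.sum_congr rfl fun X _ => ?_
        rw [← Finset.mul_prod_erase K _ ht]
        congr 1
        exact Finset.prod_congr rfl fun e he => by rw [hinv c e he X]
    _ = ∑ X : V → F, (∑ c : F, φ (edgeDiff (X + g c) t)) * ∏ e ∈ K.erase t, φ (edgeDiff X e) := by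
        rw [Finset.sum_comm]
        exact Finset.sum_congr rfl fun X _ => by rw [Finset.sum_mul]
    _ = (∑ c : F, φ c) * Zsum V F φ (K.erase t) := by
        rw [Zsum, Finset.mul_sum]
        refine Finset.sum_congr rfl fun X _ => ?_
        congr 1
        rcases htshift with h | h
        · calc ∑ c : F, φ (edgeDiff (X + g c) t) = ∑ c : F, φ (edgeDiff X t + c) := by
                exact Finset.sum_congr rfl fun c _ => by rw [h c X]
            _ = ∑ c : F, φ c :=
                Fintype.sum_equiv (Equiv.addLeft (edgeDiff X t))
                  (fun c => φ (edgeDiff X t + c)) φ (fun c => by simp)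
        · calc ∑ c : F, φ (edgeDiff (X + g c) t) = ∑ c : F, φ (edgeDiff X t - c) := by
                exact Finset.sum_congr rfl fun c _ => by rw [h c X]
            _ = ∑ c : F, φ c :=
                Fintype.sum_equiv (Equiv.subLeft (edgeDiff X t))
                  (fun c => φ (edgeDiff X t - c)) φ (fun c => by simp)

section Graphs

open SimpleGraph

variable {V : Type} [Fintype V]

lemma fromEdgeSet_finset_erase (K : Finset (Sym2 V)) (t : Sym2 V) :
    SimpleGraph.fromEdgeSet ((K.erase t : Finset (Sym2 V)) : Set (Sym2 V)) =
      SimpleGraph.fromEdgeSet (K : Set (Sym2 V)) \ SimpleGraph.fromEdgeSet {t} := by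
  ext x y
  simp only [fromEdgeSet_adj, Finset.coe_erase, Set.mem_diff, Set.mem_singleton_iff,
    sdiff_adj, Finset.mem_coe, Set.mem_setOf_eq]
  constructor
  · rintro ⟨⟨hmem, hne⟩, hxy⟩
    exact ⟨⟨hmem, hxy⟩, fun h => hne h.1⟩
  · rintro ⟨⟨hmem, hxy⟩, hne⟩
    exact ⟨⟨hmem, fun h => hne ⟨h, hxy⟩⟩, hxy⟩

/-- reachability in `K` lifts to reachability in `K.erase t` when the endpoints of `t`
are joined in `K.erase t`. -/
lemma reachable_erase_of_reachable {K : Finset (Sym2 V)} {t : Sym2 V} {u w : V}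
    (htuw : t = s(u, w))
    (hr : (SimpleGraph.fromEdgeSet ((K.erase t : Finset (Sym2 V)) : Set (Sym2 V))).Reachable u w)
    {x y : V} (h : (SimpleGraph.fromEdgeSet (K : Set (Sym2 V))).Reachable x y) :
    (SimpleGraph.fromEdgeSet ((K.erase t : Finset (Sym2 V)) : Set (Sym2 V))).Reachable x y := by
  obtain ⟨p⟩ := h
  induction p with
  | nil => rfl
  | cons hadj q ih =>
    rename_i a b c
    refine Reachable.trans ?_ ih
    rw [fromEdgeSet_adj] at hadj
    by_cases hst : s(a, b) = t
    · rw [htuw] at hst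
      rcases Sym2.eq_iff.mp hst with ⟨h1, h2⟩ | ⟨h1, h2⟩
      · rw [h1, h2]; exact hr
      · rw [h1, h2]; exact hr.symm
    · refine Adj.reachable ?_
      rw [fromEdgeSet_adj]
      refine ⟨?_, hadj.2⟩
      simp only [Finset.coe_erase, Set.mem_diff, Set.mem_singleton_iff, Finset.mem_coe]
      exact ⟨hadj.1, hst⟩

/-- the component-counting characterization of being a bridge. -/
lemma cComp_gt_iff {K : Finset (Sym2 V)} {t : Sym2 V} (ht : t ∈ K) {u w : V}
    (htuw : t = s(u, w)) (huw : u ≠ w) :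
    cComp V (K.erase t) > cComp V K ↔
      ¬ (SimpleGraph.fromEdgeSet ((K.erase t : Finset (Sym2 V)) : Set (Sym2 V))).Reachable u w := by
  set G' := SimpleGraph.fromEdgeSet ((K.erase t : Finset (Sym2 V)) : Set (Sym2 V)) with hG'
  set G := SimpleGraph.fromEdgeSet (K : Set (Sym2 V)) with hG
  have hle : G' ≤ G := fromEdgeSet_mono (by exact_mod_cast Finset.erase_subset t K)
  set Φ : G'.ConnectedComponent → G.ConnectedComponent :=
    ConnectedComponent.map (SimpleGraph.Hom.ofLE hle) with hΦ
  have hmk : ∀ v : V, Φ (G'.connectedComponentMk v) = G.connectedComponentMk v := fun v => rfl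
  have hsurj : Function.Surjective Φ := by
    intro c
    induction c using SimpleGraph.ConnectedComponent.ind with
    | _ v => exact ⟨G'.connectedComponentMk v, hmk v⟩
  have hcards : cComp V K = Fintype.card G.ConnectedComponent := by
    rw [cComp, Nat.card_eq_fintype_card]
  have hcards' : cComp V (K.erase t) = Fintype.card G'.ConnectedComponent := by
    rw [cComp, Nat.card_eq_fintype_card]
  have hadjuw : G.Adj u w := by
    rw [hG, fromEdgeSet_adj]
    exact ⟨by rw [← htuw]; exact_mod_cast ht, huw⟩
  constructor
  · intro hgt hr
    -- if reachable, Φ is injective, contradicting the strict inequality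
    have hinj : Function.Injective Φ := by
      intro c d hcd
      induction c using SimpleGraph.ConnectedComponent.ind with
      | _ x =>
      induction d using SimpleGraph.ConnectedComponent.ind with
      | _ y =>
      rw [hmk, hmk, SimpleGraph.ConnectedComponent.eq] at hcd
      rw [SimpleGraph.ConnectedComponent.eq]
      exact reachable_erase_of_reachable htuw hr hcd
    have := Fintype.card_le_of_injective Φ hinj
    omega
  · intro hnr
    have hne : Φ (G'.connectedComponentMk u) = Φ (G'.connectedComponentMk w) := by
      rw [hmk, hmk]
      exact SimpleGraph.ConnectedComponent.sound hadjuw.reachable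
    have hnoteq : G'.connectedComponentMk u ≠ G'.connectedComponentMk w := by
      intro h
      exact hnr (SimpleGraph.ConnectedComponent.exact h)
    have hninj : ¬ Function.Injective Φ := fun hinj => hnoteq (hinj hne)
    have := Fintype.card_lt_of_surjective_not_injective Φ hsurj hninj
    omega

/-- a vertex meeting no edge of `K` reaches only itself. -/
lemma not_reachable_of_isolated {K : Finset (Sym2 V)} {a b : V} (hab : a ≠ b)
    (ha : ∀ e ∈ K, a ∉ e) :
    ¬ (SimpleGraph.fromEdgeSet (K : Set (Sym2 V))).Reachable a b := by
  rintro ⟨p⟩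
  cases p with
  | nil => exact hab rfl
  | cons hadj q =>
    rename_i c
    rw [fromEdgeSet_adj] at hadj
    exact ha s(a, c) (by exact_mod_cast hadj.1) (Sym2.mem_mk_left a c)

end Graphs

section Forest

open SimpleGraph

variable {V : Type} [Fintype V]

/-- `K` is a forest: its graph is acyclic. -/
def EForest (K : Finset (Sym2 V)) : Prop :=
  (SimpleGraph.fromEdgeSet (K : Set (Sym2 V))).IsAcyclic

lemma EForest_mono {K L : Finset (Sym2 V)} (h : K ⊆ L) (hL : EForest L) : EForest K := by
  intro x c hc
  exact hL (c.mapLe (fromEdgeSet_mono (by exact_mod_cast h))) (hc.mapLe _)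

lemma EForest_empty : EForest (∅ : Finset (Sym2 V)) := by
  unfold EForest
  rw [Finset.coe_empty, fromEdgeSet_empty]
  exact isAcyclic_bot

/-- in a forest, the two endpoints of an edge are not joined after removing it. -/
lemma EForest.not_reachable_erase {K : Finset (Sym2 V)} {t : Sym2 V} (ht : t ∈ K)
    {u w : V} (htuw : t = s(u, w)) (huw : u ≠ w) (hK : EForest K) :
    ¬ (SimpleGraph.fromEdgeSet ((K.erase t : Finset (Sym2 V)) : Set (Sym2 V))).Reachable u w := by
  have hadj : (SimpleGraph.fromEdgeSet (K : Set (Sym2 V))).Adj u w := by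
    rw [fromEdgeSet_adj]
    exact ⟨by rw [← htuw]; exact_mod_cast ht, huw⟩
  have hbr := isAcyclic_iff_forall_adj_isBridge.mp hK hadj
  rw [isBridge_iff] at hbr
  intro hr
  refine hbr (hr.mono ?_)
  simp only [fromEdgeSet_finset_erase, htuw, deleteEdges, le_refl]

lemma nondiag_out_ne {t : Sym2 V} (h : ¬ t.IsDiag) : t.out.1 ≠ t.out.2 := by
  intro he
  apply h
  rw [← sym2_mk_out t, Sym2.mk_isDiag_iff]
  exact he

variable {F : Type} [Fintype F] [AddCommGroup F]

lemma Zsum_forest (φ : F → ℝ) :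
    ∀ (m : ℕ) (K : Finset (Sym2 V)), K.card = m → (∀ e ∈ K, ¬ e.IsDiag) → EForest K →
      (Fintype.card F : ℝ) ^ K.card * Zsum V F φ K =
        (∑ c : F, φ c) ^ K.card * (Fintype.card F : ℝ) ^ (Fintype.card V) := by
  intro m
  induction m with
  | zero =>
    intro K hK _ _
    rw [Finset.card_eq_zero.mp hK, Zsum_empty]
    simp
  | succ m ih =>
    intro K hK hnd hfor
    obtain ⟨t, ht⟩ := Finset.card_pos.mp (by omega : 0 < K.card)
    have hne := nondiag_out_ne (hnd t ht)
    have hnr := hfor.not_reachable_erase ht (sym2_mk_out t).symm hne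
    have hkey := Zsum_erase φ ht (sym2_mk_out t).symm hnr
    have hcard : (K.erase t).card = m := by
      rw [Finset.card_erase_of_mem ht]; omega
    have hih := ih (K.erase t) hcard (fun e he => hnd e (Finset.erase_subset t K he))
      (EForest_mono (Finset.erase_subset t K) hfor)
    rw [hcard] at hih
    rw [hK, pow_succ, pow_succ]
    calc (Fintype.card F : ℝ) ^ m * (Fintype.card F : ℝ) * Zsum V F φ K
        = (Fintype.card F : ℝ) ^ m * ((Fintype.card F : ℝ) * Zsum V F φ K) := by ring
      _ = (Fintype.card F : ℝ) ^ m * ((∑ c : F, φ c) * Zsum V F φ (K.erase t)) := by rw [hkey]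
      _ = (∑ c : F, φ c) * ((Fintype.card F : ℝ) ^ m * Zsum V F φ (K.erase t)) := by ring
      _ = (∑ c : F, φ c) * ((∑ c : F, φ c) ^ m * (Fintype.card F : ℝ) ^ (Fintype.card V)) := by
          rw [hih]
      _ = (∑ c : F, φ c) ^ m * (∑ c : F, φ c) * (Fintype.card F : ℝ) ^ (Fintype.card V) := by ring

lemma Zsum_path (φ : F → ℝ) {K : Finset (Sym2 V)} {a b : V}
    (p : (SimpleGraph.fromEdgeSet (K : Set (Sym2 V))).Walk a b) (hp : p.IsPath) :
    (Fintype.card F : ℝ) ^ p.length * Zsum V F φ p.edges.toFinset =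
      (∑ c : F, φ c) ^ p.length * (Fintype.card F : ℝ) ^ (Fintype.card V) := by
  induction p with
  | nil => simpa using Zsum_empty (V := V) φ
  | cons hadj q ih =>
    rename_i x y z
    rw [SimpleGraph.Walk.cons_isPath_iff] at hp
    obtain ⟨hq, hxs⟩ := hp
    have htQ : s(x, y) ∉ q.edges.toFinset := by
      intro h
      exact hxs (q.fst_mem_support_of_mem_edges (List.mem_toFinset.mp h))
    have hiso : ∀ e ∈ q.edges.toFinset, x ∉ e := by
      intro e he hxe
      obtain ⟨c, rfl⟩ := Sym2.mem_iff_exists.mp hxe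
      exact hxs (q.fst_mem_support_of_mem_edges (List.mem_toFinset.mp he))
    have hnr : ¬ (SimpleGraph.fromEdgeSet
        (((insert s(x, y) q.edges.toFinset).erase s(x, y) : Finset (Sym2 V)) :
          Set (Sym2 V))).Reachable x y := by
      rw [Finset.erase_insert htQ]
      exact not_reachable_of_isolated hadj.ne hiso
    have hkey := Zsum_erase φ (Finset.mem_insert_self s(x, y) q.edges.toFinset) rfl hnr
    rw [Finset.erase_insert htQ] at hkey
    have hedges : (SimpleGraph.Walk.cons hadj q).edges.toFinset
        = insert s(x, y) q.edges.toFinset := by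
      rw [SimpleGraph.Walk.edges_cons, List.toFinset_cons]
    rw [hedges, SimpleGraph.Walk.length_cons, pow_succ, pow_succ]
    calc (Fintype.card F : ℝ) ^ q.length * (Fintype.card F : ℝ) *
          Zsum V F φ (insert s(x, y) q.edges.toFinset)
        = (Fintype.card F : ℝ) ^ q.length *
            ((Fintype.card F : ℝ) * Zsum V F φ (insert s(x, y) q.edges.toFinset)) := by ring
      _ = (Fintype.card F : ℝ) ^ q.length *
            ((∑ c : F, φ c) * Zsum V F φ q.edges.toFinset) := by rw [hkey]
      _ = (∑ c : F, φ c) * ((Fintype.card F : ℝ) ^ q.length * Zsum V F φ q.edges.toFinset) := by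
          ring
      _ = (∑ c : F, φ c) * ((∑ c : F, φ c) ^ q.length *
            (Fintype.card F : ℝ) ^ (Fintype.card V)) := by rw [ih hq]
      _ = (∑ c : F, φ c) ^ q.length * (∑ c : F, φ c) *
            (Fintype.card F : ℝ) ^ (Fintype.card V) := by ring

end Forest

section NonForest

open SimpleGraph

variable {V : Type} [Fintype V] {F : Type} [Fintype F] [AddCommGroup F]

lemma Zsum_nonneg (η : F → ℝ) (hη0 : ∀ c, 0 ≤ η c) (K : Finset (Sym2 V)) :
    0 ≤ Zsum V F η K :=
  Finset.sum_nonneg fun X _ => Finset.prod_nonneg fun e _ => hη0 _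

lemma Zsum_mono_subset (η : F → ℝ) (hη0 : ∀ c, 0 ≤ η c) (hη1 : ∀ c, η c ≤ 1)
    {Q K : Finset (Sym2 V)} (h : Q ⊆ K) : Zsum V F η K ≤ Zsum V F η Q := by
  refine Finset.sum_le_sum fun X _ => ?_
  rw [← Finset.prod_sdiff h]
  calc (∏ e ∈ K \ Q, η (edgeDiff X e)) * ∏ e ∈ Q, η (edgeDiff X e)
      ≤ 1 * ∏ e ∈ Q, η (edgeDiff X e) := by
        refine mul_le_mul_of_nonneg_right ?_ (Finset.prod_nonneg fun e _ => hη0 _)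
        exact Finset.prod_le_one (fun e _ => hη0 _) (fun e _ => hη1 _)
    _ = ∏ e ∈ Q, η (edgeDiff X e) := one_mul _

lemma Zsum_nonforest_le (η : F → ℝ) (hη0 : ∀ c, 0 ≤ η c) (hη1 : ∀ c, η c ≤ 1)
    {K E : Finset (Sym2 V)} (hKE : K ⊆ E) (hnf : ¬ EForest K) :
    Zsum V F η K ≤ ((∑ c : F, η c) / (Fintype.card F : ℝ)) ^
        ((SimpleGraph.fromEdgeSet (E : Set (Sym2 V))).girth - 1) *
      (Fintype.card F : ℝ) ^ (Fintype.card V) := by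
  have hfpos : (0 : ℝ) < (Fintype.card F : ℝ) := by
    exact_mod_cast Fintype.card_pos
  have hs0 : 0 ≤ (∑ c : F, η c) / (Fintype.card F : ℝ) :=
    div_nonneg (Finset.sum_nonneg fun c _ => hη0 c) hfpos.le
  have hs1 : (∑ c : F, η c) / (Fintype.card F : ℝ) ≤ 1 := by
    rw [div_le_one hfpos]
    calc ∑ c : F, η c ≤ ∑ _c : F, (1 : ℝ) := Finset.sum_le_sum fun c _ => hη1 c
      _ = (Fintype.card F : ℝ) := by simp
  -- obtain a cycle in the graph of `K`
  unfold EForest SimpleGraph.IsAcyclic at hnf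
  push_neg at hnf
  obtain ⟨v, c, hc⟩ := hnf
  -- the girth of `E` is at most the length of this cycle
  have hle : SimpleGraph.fromEdgeSet (K : Set (Sym2 V)) ≤
      SimpleGraph.fromEdgeSet (E : Set (Sym2 V)) :=
    fromEdgeSet_mono (by exact_mod_cast hKE)
  have hgirth : (SimpleGraph.fromEdgeSet (E : Set (Sym2 V))).girth ≤ c.length := by
    have h1 : (SimpleGraph.fromEdgeSet (E : Set (Sym2 V))).egirth ≤
        ((c.mapLe hle).length : ℕ∞) := by
      rw [SimpleGraph.egirth]
      exact iInf_le_of_le v (iInf_le_of_le (c.mapLe hle) (iInf_le_of_le (hc.mapLe _) le_rfl))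
    have h2 := ENat.toNat_le_toNat h1 (by simp)
    simpa [SimpleGraph.girth, SimpleGraph.Walk.mapLe, SimpleGraph.Walk.length_map] using h2
  -- decompose the cycle as an edge plus a path
  cases c with
  | nil => exact absurd rfl hc.ne_nil
  | cons hadj q =>
    rename_i y
    rw [SimpleGraph.Walk.cons_isCycle_iff] at hc
    have hQK : q.edges.toFinset ⊆ K := by
      intro e he
      have := q.edges_subset_edgeSet (List.mem_toFinset.mp he)
      rw [edgeSet_fromEdgeSet] at this
      exact_mod_cast this.1
    have hQcard : q.edges.toFinset.card = q.length := by
      rw [List.toFinset_card_of_nodup hc.1.edges_nodup, SimpleGraph.Walk.length_edges]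
    -- value on the path
    have hpath := Zsum_path η q hc.1
    have hZQ : Zsum V F η q.edges.toFinset =
        ((∑ c : F, η c) / (Fintype.card F : ℝ)) ^ q.length *
          (Fintype.card F : ℝ) ^ (Fintype.card V) := by
      have hfne : ((Fintype.card F : ℝ)) ^ q.length ≠ 0 := by positivity
      rw [div_pow, div_mul_eq_mul_div, eq_div_iff hfne]
      linear_combination hpath
    calc Zsum V F η K ≤ Zsum V F η q.edges.toFinset := Zsum_mono_subset η hη0 hη1 hQK
      _ = ((∑ c : F, η c) / (Fintype.card F : ℝ)) ^ q.length *
            (Fintype.card F : ℝ) ^ (Fintype.card V) := hZQ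
      _ ≤ ((∑ c : F, η c) / (Fintype.card F : ℝ)) ^
            ((SimpleGraph.fromEdgeSet (E : Set (Sym2 V))).girth - 1) *
          (Fintype.card F : ℝ) ^ (Fintype.card V) := by
          refine mul_le_mul_of_nonneg_right ?_ (by positivity)
          refine pow_le_pow_of_le_one hs0 hs1 ?_
          have : (SimpleGraph.Walk.cons hadj q).length = q.length + 1 :=
            SimpleGraph.Walk.length_cons hadj q
          omega

end NonForest

section Mu

open SimpleGraph Finset

variable {V : Type} [Fintype V]

/-- the forest-sum representation of the Möbius function. -/
def mForest (L : Finset (Sym2 V)) : ℤ :=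
  ∑ K ∈ L.powerset.filter EForest, (-1 : ℤ) ^ (L.card - K.card)

lemma EForest_insert {L K : Finset (Sym2 V)} {t : Sym2 V} {u w : V}
    (htL : t ∈ L) (htuw : t = s(u, w)) (huw : u ≠ w)
    (hbr : ¬ (SimpleGraph.fromEdgeSet ((L.erase t : Finset (Sym2 V)) :
      Set (Sym2 V))).Reachable u w)
    (hKL : K ⊆ L.erase t) (hK : EForest K) : EForest (insert t K) := by
  intro x c hc
  by_cases hmem : t ∈ c.edges
  · -- a cycle through the bridge `t` is impossible
    have hsub : ∀ e ∈ c.edges, e ∈ (SimpleGraph.fromEdgeSet (L : Set (Sym2 V))).edgeSet := by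
      intro e he
      have h1 := c.edges_subset_edgeSet he
      rw [edgeSet_fromEdgeSet] at h1 ⊢
      refine ⟨?_, h1.2⟩
      have h2 : e ∈ (insert t K : Finset (Sym2 V)) := by exact_mod_cast h1.1
      rcases Finset.mem_insert.mp h2 with rfl | h3
      · exact_mod_cast htL
      · exact_mod_cast (Finset.erase_subset t L) (hKL h3)
    have hadjL : (SimpleGraph.fromEdgeSet (L : Set (Sym2 V))).Adj u w := by
      rw [fromEdgeSet_adj]
      exact ⟨by rw [← htuw]; exact_mod_cast htL, huw⟩
    have hIB : (SimpleGraph.fromEdgeSet (L : Set (Sym2 V))).IsBridge s(u, w) := by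
      rw [isBridge_iff]
      rw [← htuw, deleteEdges, ← fromEdgeSet_finset_erase]
      exact hbr
    rw [isBridge_iff_adj_and_forall_cycle_notMem ((SimpleGraph.mem_edgeSet _).mpr hadjL)] at hIB
    refine hIB (c.transfer _ hsub) (hc.transfer hsub) ?_
    rw [SimpleGraph.Walk.edges_transfer, ← htuw]
    exact hmem
  · -- otherwise the cycle lives in the forest `K`
    have hsub : ∀ e ∈ c.edges, e ∈ (SimpleGraph.fromEdgeSet (K : Set (Sym2 V))).edgeSet := by
      intro e he
      have h1 := c.edges_subset_edgeSet he
      rw [edgeSet_fromEdgeSet] at h1 ⊢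
      refine ⟨?_, h1.2⟩
      have h2 : e ∈ (insert t K : Finset (Sym2 V)) := by exact_mod_cast h1.1
      rcases Finset.mem_insert.mp h2 with rfl | h3
      · exact absurd he hmem
      · exact_mod_cast h3
    exact hK (c.transfer _ hsub) (hc.transfer hsub)

lemma mForest_eq_zero {L : Finset (Sym2 V)} {t : Sym2 V} {u w : V}
    (htL : t ∈ L) (htuw : t = s(u, w)) (huw : u ≠ w)
    (hbr : ¬ (SimpleGraph.fromEdgeSet ((L.erase t : Finset (Sym2 V)) :
      Set (Sym2 V))).Reachable u w) :
    mForest L = 0 := by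
  refine Finset.sum_involution
    (g := fun K _ => if t ∈ K then K.erase t else insert t K) ?_ ?_ ?_ ?_
  · -- opposite signs
    intro K hK
    rw [Finset.mem_filter, Finset.mem_powerset] at hK
    have hcardle : K.card ≤ L.card := Finset.card_le_card hK.1
    by_cases h : t ∈ K
    · rw [if_pos h, Finset.card_erase_of_mem h]
      have h1 : 1 ≤ K.card := Finset.card_pos.mpr ⟨t, h⟩
      have h2 : L.card - (K.card - 1) = (L.card - K.card) + 1 := by omega
      rw [h2, pow_succ]
      ring
    · rw [if_neg h, Finset.card_insert_of_notMem h]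
      have hsub : insert t K ⊆ L := Finset.insert_subset htL hK.1
      have h1 : K.card + 1 ≤ L.card := by
        have := Finset.card_le_card hsub
        rwa [Finset.card_insert_of_notMem h] at this
      have h2 : L.card - K.card = (L.card - (K.card + 1)) + 1 := by omega
      rw [h2, pow_succ]
      ring
  · -- the involution moves every point
    intro K hK _
    by_cases h : t ∈ K
    · rw [if_pos h]
      intro heq
      rw [← heq] at h
      exact Finset.notMem_erase t K h
    · rw [if_neg h]
      intro heq
      exact h (heq ▸ Finset.mem_insert_self t K)
  · -- membership
    intro K hK
    rw [Finset.mem_filter, Finset.mem_powerset] at hK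
    by_cases h : t ∈ K
    · rw [if_pos h, Finset.mem_filter, Finset.mem_powerset]
      exact ⟨(Finset.erase_subset t K).trans hK.1,
        EForest_mono (Finset.erase_subset t K) hK.2⟩
    · rw [if_neg h, Finset.mem_filter, Finset.mem_powerset]
      refine ⟨Finset.insert_subset htL hK.1, ?_⟩
      exact EForest_insert htL htuw huw hbr (Finset.subset_erase.mpr ⟨hK.1, h⟩) hK.2
  · -- involutive
    intro K hK
    by_cases h : t ∈ K
    · simp only [if_pos h, if_neg (Finset.notMem_erase t K)]
      exact Finset.insert_erase h
    · simp only [if_neg h, if_pos (Finset.mem_insert_self t K)]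
      exact Finset.erase_insert h

/-- alternating sum over sets between `K` and `H`. -/
lemma sum_superset_neg_one_pow {H K : Finset (Sym2 V)} (hK : K ⊆ H) :
    ∑ L ∈ H.powerset.filter (fun L => K ⊆ L), (-1 : ℤ) ^ (L.card - K.card) =
      if K = H then 1 else 0 := by
  have hbij : ∑ L ∈ H.powerset.filter (fun L => K ⊆ L), (-1 : ℤ) ^ (L.card - K.card) =
      ∑ M ∈ (H \ K).powerset, (-1 : ℤ) ^ M.card := by
    refine Finset.sum_nbij' (fun L => L \ K) (fun M => K ∪ M) ?_ ?_ ?_ ?_ ?_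
    · intro L hL
      rw [Finset.mem_filter, Finset.mem_powerset] at hL
      rw [Finset.mem_powerset]
      exact Finset.sdiff_subset_sdiff hL.1 le_rfl
    · intro M hM
      rw [Finset.mem_powerset] at hM
      rw [Finset.mem_filter, Finset.mem_powerset]
      exact ⟨Finset.union_subset hK (hM.trans Finset.sdiff_subset), Finset.subset_union_left⟩
    · intro L hL
      rw [Finset.mem_filter, Finset.mem_powerset] at hL
      rw [Finset.union_comm, Finset.sdiff_union_of_subset hL.2]
    · intro M hM
      rw [Finset.mem_powerset] at hM
      rw [Finset.union_sdiff_cancel_left]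
      exact Finset.disjoint_left.mpr fun a haK haM => (Finset.mem_sdiff.mp (hM haM)).2 haK
    · intro L hL
      rw [Finset.mem_filter, Finset.mem_powerset] at hL
      rw [Finset.card_sdiff_of_subset hL.2]
  rw [hbij, Finset.sum_powerset_neg_one_pow_card]
  by_cases h : K = H
  · rw [if_pos h, if_pos (by rw [h, Finset.sdiff_self])]
  · rw [if_neg ?_, if_neg h]
    intro heq
    exact h (Finset.Subset.antisymm hK (Finset.sdiff_eq_empty_iff_subset.mp heq))

lemma sum_mForest (H : Finset (Sym2 V)) :
    ∑ L ∈ H.powerset, mForest L = if EForest H then 1 else 0 := by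
  unfold mForest
  rw [Finset.sum_comm' (t' := H.powerset.filter EForest)
    (s' := fun K => H.powerset.filter (fun L => K ⊆ L))
    (f := fun L K => (-1 : ℤ) ^ (L.card - K.card))]
  · calc ∑ K ∈ H.powerset.filter EForest,
          ∑ L ∈ H.powerset.filter (fun L => K ⊆ L), (-1 : ℤ) ^ (L.card - K.card)
        = ∑ K ∈ H.powerset.filter EForest, if K = H then 1 else 0 := by
          refine Finset.sum_congr rfl fun K hKmem => ?_
          rw [Finset.mem_filter, Finset.mem_powerset] at hKmem
          exact sum_superset_neg_one_pow hKmem.1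
      _ = if EForest H then 1 else 0 := by
          rw [Finset.sum_ite_eq' (H.powerset.filter EForest) H (fun _ => (1 : ℤ))]
          simp [Finset.mem_filter, Finset.mem_powerset]
  · intro L K
    simp only [Finset.mem_filter, Finset.mem_powerset]
    constructor
    · rintro ⟨hL, hKL, hKfor⟩
      exact ⟨⟨hL, hKL⟩, hKL.trans hL, hKfor⟩
    · rintro ⟨⟨hL, hKL⟩, hKH, hKfor⟩
      exact ⟨hL, hKL, hKfor⟩

end Mu

section MuLink

open SimpleGraph Finset

variable {V : Type} [Fintype V]

lemma exists_bridge_of_not_isthmusFree {H : Finset (Sym2 V)} (hnd : ∀ e ∈ H, ¬ e.IsDiag)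
    (h : ¬ IsthmusFree V H) :
    ∃ t ∈ H, t.out.1 ≠ t.out.2 ∧
      ¬ (SimpleGraph.fromEdgeSet ((H.erase t : Finset (Sym2 V)) :
          Set (Sym2 V))).Reachable t.out.1 t.out.2 := by
  unfold IsthmusFree at h
  push_neg at h
  obtain ⟨t, ht, hgt⟩ := h
  have hne := nondiag_out_ne (hnd t ht)
  exact ⟨t, ht, hne, (cComp_gt_iff ht (sym2_mk_out t).symm hne).mp hgt⟩

lemma mForest_eq_zero_of_not_isthmusFree {H : Finset (Sym2 V)} (hnd : ∀ e ∈ H, ¬ e.IsDiag)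
    (h : ¬ IsthmusFree V H) : mForest H = 0 := by
  obtain ⟨t, ht, hne, hnr⟩ := exists_bridge_of_not_isthmusFree hnd h
  exact mForest_eq_zero ht (sym2_mk_out t).symm hne hnr

lemma not_EForest_of_isthmusFree {H : Finset (Sym2 V)} (hne : H.Nonempty)
    (hnd : ∀ e ∈ H, ¬ e.IsDiag) (hfree : IsthmusFree V H) : ¬ EForest H := by
  obtain ⟨t, ht⟩ := hne
  have hnet := nondiag_out_ne (hnd t ht)
  intro hfor
  exact hfree t ht ((cComp_gt_iff ht (sym2_mk_out t).symm hnet).mpr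
    (hfor.not_reachable_erase ht (sym2_mk_out t).symm hnet))

lemma muPV_eq_mForest :
    ∀ H : Finset (Sym2 V), (∀ e ∈ H, ¬ e.IsDiag) → IsthmusFree V H →
      muPV V ∅ H = mForest H := by
  intro H
  induction H using Finset.strongInductionOn with
  | _ H ih =>
    intro hnd hfree
    by_cases hHe : H = ∅
    · subst hHe
      rw [muPV, if_pos rfl]
      unfold mForest
      rw [Finset.powerset_empty, Finset.filter_singleton, if_pos EForest_empty,
        Finset.sum_singleton]
      simp
    · rw [muPV, if_neg (fun h => hHe h.symm)]
      rw [Finset.sum_attach (H.powerset.filter fun L => ∅ ⊆ L ∧ L ≠ H ∧ IsthmusFree V L)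
        (fun L => muPV V ∅ L)]
      have hstep : ∑ L ∈ H.powerset.filter (fun L => ∅ ⊆ L ∧ L ≠ H ∧ IsthmusFree V L),
          muPV V ∅ L =
          ∑ L ∈ H.powerset.filter (fun L => ∅ ⊆ L ∧ L ≠ H ∧ IsthmusFree V L), mForest L := by
        refine Finset.sum_congr rfl fun L hL => ?_
        rw [Finset.mem_filter, Finset.mem_powerset] at hL
        exact ih L (Finset.ssubset_iff_subset_ne.mpr ⟨hL.1, hL.2.2.1⟩)
          (fun e he => hnd e (hL.1 he)) hL.2.2.2
      rw [hstep]
      -- identify the index set as the isthmus-free subsets minus `H` itself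
      have hset : H.powerset.filter (fun L => ∅ ⊆ L ∧ L ≠ H ∧ IsthmusFree V L) =
          (H.powerset.filter (fun L => IsthmusFree V L)).erase H := by
        ext L
        simp only [Finset.mem_filter, Finset.mem_powerset, Finset.mem_erase,
          Finset.empty_subset, true_and]
        tauto
      -- the total refined sum vanishes
      have htotal : ∑ L ∈ H.powerset.filter (fun L => IsthmusFree V L), mForest L = 0 := by
        have hsplit := Finset.sum_filter_add_sum_filter_not H.powerset
          (fun L => IsthmusFree V L) mForest
        have hz : ∑ L ∈ H.powerset.filter (fun L => ¬ IsthmusFree V L), mForest L = 0 := by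
          refine Finset.sum_eq_zero fun L hL => ?_
          rw [Finset.mem_filter, Finset.mem_powerset] at hL
          exact mForest_eq_zero_of_not_isthmusFree (fun e he => hnd e (hL.1 he)) hL.2
        have hall : ∑ L ∈ H.powerset, mForest L = 0 := by
          rw [sum_mForest H, if_neg (not_EForest_of_isthmusFree
            (Finset.nonempty_of_ne_empty hHe) hnd hfree)]
        omega
      have hmem : H ∈ H.powerset.filter (fun L => IsthmusFree V L) := by
        rw [Finset.mem_filter, Finset.mem_powerset]
        exact ⟨le_rfl, hfree⟩
      have herase := Finset.sum_erase_add (H.powerset.filter (fun L => IsthmusFree V L))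
        mForest hmem
      rw [hset]
      omega

end MuLink

section GammaLink

open Finset

variable {V : Type} [Fintype V]

lemma gamma_card_eq_Zsum (F : Type) [Fintype F] [AddCommGroup F]
    (A : Finset F) (hA : ∀ a ∈ A, -a ∈ A) (E : Finset (Sym2 V)) :
    ((Nat.card {X : V → F // ∀ e ∈ E, ∀ u w : V, e = s(u, w) → X u - X w ∈ A}) : ℝ) =
      Zsum V F (fun c => if c ∈ A then 1 else 0) E := by
  have hiff : ∀ X : V → F,
      (∀ e ∈ E, ∀ u w : V, e = s(u, w) → X u - X w ∈ A) ↔ (∀ e ∈ E, edgeDiff X e ∈ A) := by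
    intro X
    constructor
    · intro h e he
      exact h e he e.out.1 e.out.2 (sym2_mk_out e).symm
    · intro h e he u w huw
      have h1 := h e he
      have h2 : s(e.out.1, e.out.2) = s(u, w) := by rw [sym2_mk_out]; exact huw
      rcases Sym2.eq_iff.mp h2 with ⟨ha, hb⟩ | ⟨ha, hb⟩
      · rw [← ha, ← hb]
        exact h1
      · have h3 := hA _ h1
        rw [edgeDiff, neg_sub] at h3
        rw [← ha, ← hb]
        exact h3
  rw [Nat.card_congr (Equiv.subtypeEquivRight hiff), Nat.card_eq_fintype_card,
    Fintype.card_subtype, Zsum]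
  simp only [Finset.prod_boole, Finset.sum_boole]
  norm_cast
  simp [Finset.filter_congr_decidable]

end GammaLink

/-- Corollary 2: for a fixed nonempty isthmus-free `E` of girth `g`,
there is `C > 0` depending only on `(V,E)` such that for every finite abelian group `F`
and symmetric `A ⊆ F`,
`|[Γ^A]_E - Σ_{H ∈ P_V, H ⊆ E} (-1)^{|H|} α^{|E|-|H|} ᾱ^{|H|} μ(∅,H)| ≤ C ᾱ^{g-1}`. -/
theorem gamma_main_term_estimate
    (V : Type) [Fintype V]
    (E : Finset (Sym2 V)) (hne : E.Nonempty) (hE : ∀ e ∈ E, ¬ e.IsDiag)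
    (hfree : IsthmusFree V E) :
    ∃ C : ℝ, 0 < C ∧
      ∀ (F : Type) [Fintype F] [AddCommGroup F] (A : Finset F),
        (∀ a ∈ A, -a ∈ A) →
        |Gamma V F A E -
            ∑ H ∈ E.powerset.filter (IsthmusFree V),
              (-1 : ℝ) ^ H.card *
                ((A.card : ℝ) / (Fintype.card F : ℝ)) ^ (E.card - H.card) *
                  (1 - (A.card : ℝ) / (Fintype.card F : ℝ)) ^ H.card * (muPV V ∅ H : ℝ)|
          ≤ C * (1 - (A.card : ℝ) / (Fintype.card F : ℝ)) ^
              ((SimpleGraph.fromEdgeSet (E : Set (Sym2 V))).girth - 1) := by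
  classical
  refine ⟨(2 : ℝ) ^ E.card * 2 ^ E.card, by positivity, ?_⟩
  intro F _ _ A hA
  set g : ℕ := (SimpleGraph.fromEdgeSet (E : Set (Sym2 V))).girth - 1 with hgdef
  set fR : ℝ := (Fintype.card F : ℝ) with hfRdef
  have hfpos : (0 : ℝ) < fR := by rw [hfRdef]; exact_mod_cast Fintype.card_pos
  set n : ℕ := Fintype.card V with hndef
  set al : ℝ := (A.card : ℝ) / fR with haldef
  set ab : ℝ := 1 - al with habdef
  have hal0 : 0 ≤ al := by rw [haldef]; positivity
  have hal1 : al ≤ 1 := by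
    rw [haldef, div_le_one hfpos, hfRdef]
    exact_mod_cast Finset.card_le_univ A
  have hab0 : 0 ≤ ab := by rw [habdef]; linarith
  have hab1 : ab ≤ 1 := by rw [habdef]; linarith
  set χ : F → ℝ := fun c => if c ∈ A then 1 else 0 with hχdef
  set η : F → ℝ := fun c => if c ∈ A then 0 else 1 with hηdef
  set δ : F → ℝ := fun c => χ c - al with hδdef
  have hη0 : ∀ c, 0 ≤ η c := fun c => by rw [hηdef]; dsimp only; split <;> norm_num
  have hη1 : ∀ c, η c ≤ 1 := fun c => by rw [hηdef]; dsimp only; split <;> norm_num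
  have hχsum : ∑ c : F, χ c = (A.card : ℝ) := by
    rw [hχdef]
    rw [Finset.sum_boole]
    congr 1
    rw [Finset.filter_mem_eq_inter, Finset.univ_inter]
  have hδsum : ∑ c : F, δ c = 0 := by
    rw [hδdef]
    rw [Finset.sum_sub_distrib, hχsum, Finset.sum_const, Finset.card_univ, nsmul_eq_mul,
      haldef]
    field_simp
    rw [hfRdef]; ring
  have hηχ : ∀ c, η c = 1 - χ c := fun c => by
    rw [hηdef, hχdef]; dsimp only; split <;> norm_num
  have hηsum : ∑ c : F, η c = fR * ab := by
    rw [Finset.sum_congr rfl fun c _ => hηχ c, Finset.sum_sub_distrib, hχsum,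
      Finset.sum_const, Finset.card_univ, nsmul_eq_mul, mul_one, habdef, haldef]
    field_simp
    rw [hfRdef]
  have hδη : ∀ x : F, δ x = -η x + ab := by
    intro x
    rw [hδdef, hηχ x, habdef]
    ring
  -- Step 1 : Gamma in terms of Zsum
  have step1 : Gamma V F A E = Zsum V F χ E / fR ^ n := by
    rw [Gamma, gamma_card_eq_Zsum F A hA E, hχdef]
  -- Step 3 : first expansion
  have step3 : Zsum V F χ E = ∑ H ∈ E.powerset, al ^ (E.card - H.card) * Zsum V F δ H := by
    rw [Zsum]
    have hpt : ∀ X : V → F, (∏ e ∈ E, χ (edgeDiff X e)) =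
        ∑ H ∈ E.powerset, (∏ e ∈ H, δ (edgeDiff X e)) * al ^ (E.card - H.card) := by
      intro X
      have h1 : ∀ e ∈ E, χ (edgeDiff X e) = δ (edgeDiff X e) + al := by
        intro e _
        rw [hδdef]
        ring
      rw [Finset.prod_congr rfl h1, Finset.prod_add]
      refine Finset.sum_congr rfl fun H hH => ?_
      rw [Finset.prod_const, Finset.card_sdiff_of_subset (Finset.mem_powerset.mp hH)]
    rw [Finset.sum_congr rfl fun X _ => hpt X, Finset.sum_comm]
    refine Finset.sum_congr rfl fun H _ => ?_
    rw [Zsum, Finset.mul_sum]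
    refine Finset.sum_congr rfl fun X _ => ?_
    ring
  -- Step 4 : vanishing for sets with an isthmus
  have step4 : ∀ H ∈ E.powerset, ¬ IsthmusFree V H → Zsum V F δ H = 0 := by
    intro H hH hni
    have hnd : ∀ e ∈ H, ¬ e.IsDiag := fun e he => hE e (Finset.mem_powerset.mp hH he)
    obtain ⟨t, ht, hnet, hnr⟩ := exists_bridge_of_not_isthmusFree hnd hni
    have hkey := Zsum_erase δ ht (sym2_mk_out t).symm hnr
    rw [hδsum, zero_mul] at hkey
    rcases mul_eq_zero.mp hkey with h | h
    · exact absurd h hfpos.ne'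
    · exact h
  -- Step 5 : restrict to isthmus-free sets
  have step5 : Zsum V F χ E =
      ∑ H ∈ E.powerset.filter (IsthmusFree V), al ^ (E.card - H.card) * Zsum V F δ H := by
    rw [step3]
    refine (Finset.sum_filter_of_ne ?_).symm
    intro H hH hne0
    by_contra hni
    exact hne0 (by rw [step4 H hH hni, mul_zero])
  -- Step 6 : second expansion
  have step6 : ∀ H : Finset (Sym2 V), Zsum V F δ H =
      ∑ K ∈ H.powerset, (-1 : ℝ) ^ K.card *
        (ab ^ (H.card - K.card) * Zsum V F η K) := by
    intro H
    rw [Zsum]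
    have hpt : ∀ X : V → F, (∏ e ∈ H, δ (edgeDiff X e)) =
        ∑ K ∈ H.powerset, ((-1 : ℝ) ^ K.card * ∏ e ∈ K, η (edgeDiff X e)) *
          ab ^ (H.card - K.card) := by
      intro X
      have h1 : ∀ e ∈ H, δ (edgeDiff X e) = -η (edgeDiff X e) + ab := fun e _ => hδη _
      rw [Finset.prod_congr rfl h1, Finset.prod_add]
      refine Finset.sum_congr rfl fun K hK => ?_
      rw [Finset.prod_const, Finset.card_sdiff_of_subset (Finset.mem_powerset.mp hK)]
      congr 1
      calc ∏ e ∈ K, (-η (edgeDiff X e)) = ∏ e ∈ K, ((-1) * η (edgeDiff X e)) := by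
            refine Finset.prod_congr rfl fun e _ => ?_
            ring
        _ = (-1 : ℝ) ^ K.card * ∏ e ∈ K, η (edgeDiff X e) := by
            rw [Finset.prod_mul_distrib, Finset.prod_const]
    rw [Finset.sum_congr rfl fun X _ => hpt X, Finset.sum_comm]
    refine Finset.sum_congr rfl fun K _ => ?_
    rw [Zsum, Finset.mul_sum, Finset.mul_sum]
    refine Finset.sum_congr rfl fun X _ => ?_
    ring
  -- Step 7 : value on forests
  have step7 : ∀ K : Finset (Sym2 V), K ⊆ E → EForest K →
      Zsum V F η K = ab ^ K.card * fR ^ n := by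
    intro K hKE hfor
    have h := Zsum_forest η K.card K rfl (fun e he => hE e (hKE he)) hfor
    rw [hηsum, ← hfRdef, ← hndef, mul_pow] at h
    have hfne : fR ^ K.card ≠ 0 := by positivity
    refine mul_left_cancel₀ hfne ?_
    rw [h]
    ring
  -- Step 8 : bound on non-forests
  have step8 : ∀ K : Finset (Sym2 V), K ⊆ E → ¬ EForest K →
      Zsum V F η K ≤ ab ^ g * fR ^ n := by
    intro K hKE hnf
    have h := Zsum_nonforest_le η hη0 hη1 hKE hnf
    rw [hηsum, ← hfRdef, ← hndef, ← hgdef] at h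
    rwa [mul_div_cancel_left₀ _ hfpos.ne'] at h
  -- Step 9 : per-H decomposition
  have step9 : ∀ H ∈ E.powerset.filter (IsthmusFree V),
      Zsum V F δ H = (-1 : ℝ) ^ H.card * ab ^ H.card * (muPV V ∅ H : ℝ) * fR ^ n +
        ∑ K ∈ H.powerset.filter (fun K => ¬ EForest K),
          (-1 : ℝ) ^ K.card * (ab ^ (H.card - K.card) * Zsum V F η K) := by
    intro H hH
    rw [Finset.mem_filter, Finset.mem_powerset] at hH
    obtain ⟨hHE, hHfree⟩ := hH
    have hndH : ∀ e ∈ H, ¬ e.IsDiag := fun e he => hE e (hHE he)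
    rw [step6 H, ← Finset.sum_filter_add_sum_filter_not H.powerset EForest]
    congr 1
    -- the forest part equals the main term
    rw [muPV_eq_mForest H hndH hHfree]
    unfold mForest
    push_cast
    have hrhs : ((-1 : ℝ) ^ H.card * ab ^ H.card *
          ∑ K ∈ H.powerset.filter EForest, (-1 : ℝ) ^ (H.card - K.card)) * fR ^ n =
        ∑ K ∈ H.powerset.filter EForest,
          (-1 : ℝ) ^ H.card * ab ^ H.card * (-1 : ℝ) ^ (H.card - K.card) * fR ^ n := by
      rw [Finset.mul_sum, Finset.sum_mul]
    rw [hrhs]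
    refine Finset.sum_congr rfl fun K hK => ?_
    rw [Finset.mem_filter, Finset.mem_powerset] at hK
    obtain ⟨hKH, hKfor⟩ := hK
    rw [step7 K (hKH.trans hHE) hKfor]
    have hkh : K.card ≤ H.card := Finset.card_le_card hKH
    have hsign : (-1 : ℝ) ^ H.card * (-1 : ℝ) ^ (H.card - K.card) = (-1 : ℝ) ^ K.card := by
      rw [← pow_add]
      have h2 : H.card + (H.card - K.card) = 2 * (H.card - K.card) + K.card := by omega
      rw [h2, pow_add, pow_mul, neg_one_sq, one_pow, one_mul]
    have habk : ab ^ (H.card - K.card) * ab ^ K.card = ab ^ H.card := by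
      rw [← pow_add]
      congr 1
      omega
    rw [← hsign, ← habk]
    ring
  -- Step 10 : per-H error bound
  have step10 : ∀ H ∈ E.powerset.filter (IsthmusFree V),
      |∑ K ∈ H.powerset.filter (fun K => ¬ EForest K),
          (-1 : ℝ) ^ K.card * (ab ^ (H.card - K.card) * Zsum V F η K)| ≤
        2 ^ E.card * (ab ^ g * fR ^ n) := by
    intro H hH
    rw [Finset.mem_filter, Finset.mem_powerset] at hH
    obtain ⟨hHE, _⟩ := hH
    calc |∑ K ∈ H.powerset.filter (fun K => ¬ EForest K),
            (-1 : ℝ) ^ K.card * (ab ^ (H.card - K.card) * Zsum V F η K)|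
        ≤ ∑ K ∈ H.powerset.filter (fun K => ¬ EForest K),
            |(-1 : ℝ) ^ K.card * (ab ^ (H.card - K.card) * Zsum V F η K)| :=
          Finset.abs_sum_le_sum_abs _ _
      _ ≤ ∑ _K ∈ H.powerset.filter (fun K => ¬ EForest K), (ab ^ g * fR ^ n) := by
          refine Finset.sum_le_sum fun K hK => ?_
          rw [Finset.mem_filter, Finset.mem_powerset] at hK
          obtain ⟨hKH, hKnf⟩ := hK
          have hZ0 : 0 ≤ Zsum V F η K := Zsum_nonneg η hη0 K
          have hZle := step8 K (hKH.trans hHE) hKnf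
          rw [abs_mul, abs_mul, abs_pow, abs_pow, abs_neg, abs_one, one_pow, one_mul,
            abs_of_nonneg hab0, abs_of_nonneg hZ0]
          calc ab ^ (H.card - K.card) * Zsum V F η K
              ≤ 1 * (ab ^ g * fR ^ n) :=
                mul_le_mul (pow_le_one₀ hab0 hab1) hZle hZ0 zero_le_one
            _ = ab ^ g * fR ^ n := one_mul _
      _ ≤ 2 ^ E.card * (ab ^ g * fR ^ n) := by
          rw [Finset.sum_const, nsmul_eq_mul]
          refine mul_le_mul_of_nonneg_right ?_ (by positivity)
          have h1 := Finset.card_filter_le H.powerset (fun K => ¬ EForest K)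
          have h2 : H.powerset.card = 2 ^ H.card := Finset.card_powerset H
          have h3 : (2 : ℕ) ^ H.card ≤ 2 ^ E.card :=
            Nat.pow_le_pow_right (by norm_num) (Finset.card_le_card hHE)
          have h4 : ((H.powerset.filter (fun K => ¬ EForest K)).card : ℝ) ≤
              ((2 ^ E.card : ℕ) : ℝ) := by
            exact_mod_cast le_trans h1 (h2 ▸ h3)
          calc ((H.powerset.filter (fun K => ¬ EForest K)).card : ℝ)
              ≤ ((2 ^ E.card : ℕ) : ℝ) := h4
            _ = (2 : ℝ) ^ E.card := by push_cast; ring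
  -- final assembly
  set M : ℝ := ∑ H ∈ E.powerset.filter (IsthmusFree V),
      (-1 : ℝ) ^ H.card * al ^ (E.card - H.card) * ab ^ H.card * (muPV V ∅ H : ℝ) with hMdef
  set SErr : ℝ := ∑ H ∈ E.powerset.filter (IsthmusFree V),
      al ^ (E.card - H.card) *
        ∑ K ∈ H.powerset.filter (fun K => ¬ EForest K),
          (-1 : ℝ) ^ K.card * (ab ^ (H.card - K.card) * Zsum V F η K) with hSdef
  have hmain : Zsum V F χ E = M * fR ^ n + SErr := by
    rw [step5, hMdef, hSdef, Finset.sum_mul, ← Finset.sum_add_distrib]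
    refine Finset.sum_congr rfl fun H hH => ?_
    rw [step9 H hH]
    ring
  have hdiff : Gamma V F A E - M = SErr / fR ^ n := by
    rw [step1, hmain]
    field_simp
    ring
  have hSE : |SErr| ≤ (2 ^ E.card * 2 ^ E.card) * (ab ^ g * fR ^ n) := by
    rw [hSdef]
    calc |∑ H ∈ E.powerset.filter (IsthmusFree V),
            al ^ (E.card - H.card) *
              ∑ K ∈ H.powerset.filter (fun K => ¬ EForest K),
                (-1 : ℝ) ^ K.card * (ab ^ (H.card - K.card) * Zsum V F η K)|
        ≤ ∑ H ∈ E.powerset.filter (IsthmusFree V),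
            |al ^ (E.card - H.card) *
              ∑ K ∈ H.powerset.filter (fun K => ¬ EForest K),
                (-1 : ℝ) ^ K.card * (ab ^ (H.card - K.card) * Zsum V F η K)| :=
          Finset.abs_sum_le_sum_abs _ _
      _ ≤ ∑ _H ∈ E.powerset.filter (IsthmusFree V), (2 ^ E.card * (ab ^ g * fR ^ n)) := by
          refine Finset.sum_le_sum fun H hH => ?_
          rw [abs_mul, abs_pow, abs_of_nonneg hal0]
          calc al ^ (E.card - H.card) *
                |∑ K ∈ H.powerset.filter (fun K => ¬ EForest K),
                  (-1 : ℝ) ^ K.card * (ab ^ (H.card - K.card) * Zsum V F η K)|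
              ≤ 1 * (2 ^ E.card * (ab ^ g * fR ^ n)) :=
                mul_le_mul (pow_le_one₀ hal0 hal1) (step10 H hH) (abs_nonneg _) zero_le_one
            _ = 2 ^ E.card * (ab ^ g * fR ^ n) := one_mul _
      _ ≤ (2 ^ E.card) * (2 ^ E.card * (ab ^ g * fR ^ n)) := by
          rw [Finset.sum_const, nsmul_eq_mul]
          refine mul_le_mul_of_nonneg_right ?_ (by positivity)
          have h1 := Finset.card_filter_le E.powerset (IsthmusFree V)
          have h2 : E.powerset.card = 2 ^ E.card := Finset.card_powerset E
          have h4 : (((E.powerset.filter (IsthmusFree V)).card : ℕ) : ℝ) ≤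
              ((2 ^ E.card : ℕ) : ℝ) := by
            exact_mod_cast h2 ▸ h1
          calc (((E.powerset.filter (IsthmusFree V)).card : ℕ) : ℝ)
              ≤ ((2 ^ E.card : ℕ) : ℝ) := h4
            _ = (2 : ℝ) ^ E.card := by push_cast; ring
      _ = (2 ^ E.card * 2 ^ E.card) * (ab ^ g * fR ^ n) := by ring
  rw [hdiff, abs_div, abs_of_pos (by positivity : (0 : ℝ) < fR ^ n),
    div_le_iff₀ (by positivity : (0 : ℝ) < fR ^ n)]
  calc |SErr| ≤ (2 ^ E.card * 2 ^ E.card) * (ab ^ g * fR ^ n) := hSE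
    _ = (2 : ℝ) ^ E.card * 2 ^ E.card * ab ^ g * fR ^ n := by ring
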